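/- For any element w of a Coxeter group W, the complement of the inversion set Φ_w in Φ⁺ is closed: if α, β ∈ Φ⁺ \ Φ_w and a, b are nonnegative reals with aα + bβ ∈ Φ⁺, then aα + bβ ∉ Φ_w. -/
import Mathlib


/-- With the standard geometric representation of a Coxeter group, the
complement in `Φ⁺` of the inversion set `Φ_w = Φ⁺ ∩ w(Φ⁻)` is closed: if
`α, β ∈ Φ⁺ \ Φ_w` and `a, b ≥ 0` with `a•α + b•β ∈ Φ⁺`, then `a•α + b•β ∉ Φ_w`. -/
theorem inversion_set_coclosed {B W V : Type*} [Group W] [AddCommGroup V] [Module ℝ V]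
    (M : CoxeterMatrix B) (cs : CoxeterSystem M W)
    (ρ : W →* (V ≃ₗ[ℝ] V)) (αs : B → V)
    (Φ : Set V) (hΦ : Φ = {v | ∃ (w : W) (i : B), v = ρ w (αs i)})
    (Φpos : Set V)
    (hΦpos : Φpos = Φ ∩ {v | ∃ c : B →₀ ℝ, (∀ i, 0 ≤ c i) ∧ v = c.sum fun i r => r • αs i})
    (hsplit : Φ = Φpos ∪ (-Φpos)) (hdisj : Φpos ∩ (-Φpos) = ∅)
    (w : W) (α β : V)
    (hα : α ∈ Φpos \ (Φpos ∩ (ρ w '' (-Φpos))))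
    (hβ : β ∈ Φpos \ (Φpos ∩ (ρ w '' (-Φpos))))
    (a b : ℝ) (ha : 0 ≤ a) (hb : 0 ≤ b)
    (hsum : a • α + b • β ∈ Φpos) :
    a • α + b • β ∉ Φpos ∩ (ρ w '' (-Φpos)) := by
  classical
  rintro ⟨-, x, hx, hρx⟩
  -- Φ is invariant under the action of W
  have hinv : ∀ (u : W) (v : V), v ∈ Φ → ρ u v ∈ Φ := by
    intro u v hv
    rw [hΦ] at hv ⊢
    obtain ⟨w', i, rfl⟩ := hv
    exact ⟨u * w', i, by rw [map_mul]; rfl⟩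
  -- if γ ∈ Φpos and γ ∉ w(-Φpos), then w⁻¹ γ ∈ Φpos
  have key : ∀ γ : V, γ ∈ Φpos \ (Φpos ∩ (ρ w '' (-Φpos))) → ρ w⁻¹ γ ∈ Φpos := by
    rintro γ ⟨hγp, hγn⟩
    have hγΦ : ρ w⁻¹ γ ∈ Φ := hinv w⁻¹ γ (by rw [hΦpos] at hγp; exact hγp.1)
    rw [hsplit] at hγΦ
    rcases hγΦ with h | h
    · exact h
    · exfalso
      refine hγn ⟨hγp, ρ w⁻¹ γ, h, ?_⟩
      have : ρ w (ρ w⁻¹ γ) = (ρ w * ρ w⁻¹) γ := rfl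
      rw [this, ← map_mul, mul_inv_cancel, map_one]; rfl
  have hαp := key α hα
  have hβp := key β hβ
  -- w⁻¹ (a•α + b•β) = a • w⁻¹ α + b • w⁻¹ β = x
  have hxval : x = a • ρ w⁻¹ α + b • ρ w⁻¹ β := by
    have h1 : ρ w⁻¹ (ρ w x) = x := by
      have : ρ w⁻¹ (ρ w x) = (ρ w⁻¹ * ρ w) x := rfl
      rw [this, ← map_mul, inv_mul_cancel, map_one]; rfl
    rw [← h1, hρx]
    simp [map_add, map_smul]
  -- x is a nonnegative combination of the simple roots
  rw [hΦpos] at hαp hβp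
  obtain ⟨-, c, hc, hcval⟩ := hαp
  obtain ⟨-, d, hd, hdval⟩ := hβp
  have hxcone : ∃ e : B →₀ ℝ, (∀ i, 0 ≤ e i) ∧ x = e.sum fun i r => r • αs i := by
    refine ⟨a • c + b • d, fun i => by
      simp only [Finsupp.add_apply, Finsupp.smul_apply, smul_eq_mul]
      exact add_nonneg (mul_nonneg ha (hc i)) (mul_nonneg hb (hd i)), ?_⟩
    rw [hxval, hcval, hdval]
    rw [Finsupp.sum_add_index (by simp) (by intro i _ r s; rw [add_smul])]
    congr 1
    · rw [Finsupp.smul_sum, Finsupp.sum_smul_index (by simp)]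
      simp [mul_smul]
    · rw [Finsupp.smul_sum, Finsupp.sum_smul_index (by simp)]
      simp [mul_smul]
  -- hence x ∈ Φpos, but x ∈ -Φpos, contradicting disjointness
  have hxΦ : x ∈ Φ := by rw [hsplit]; exact Or.inr hx
  have hxpos : x ∈ Φpos := by rw [hΦpos]; exact ⟨hxΦ, hxcone⟩
  have : x ∈ Φpos ∩ (-Φpos) := ⟨hxpos, hx⟩
  rw [hdisj] at this
  exact this
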